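/- Let ε ∈ (0,1], let t be the greatest natural number with t·ε ≤ 1, and let r = t+1. For n ≤ p₁⋯p_r·p_{r+1} and any m ≤ n − r, one has m + ε·ω(m) ≤ n. Consequently n is a barrier for ε·ω if and only if m + ε·ω(m) ≤ n holds for all m ∈ {n−1, n−2, …, n−r+1}. -/

import Mathlib

lemma nth_prime_le_of_card (S : Finset ℕ) (hS : ∀ p ∈ S, p.Prime) (i : Fin S.card) :
    Nat.nth Nat.Prime i ≤ S.orderEmbOfFin rfl i := by
  set f := S.orderEmbOfFin rfl with hf
  have hp : (f i).Prime := hS _ (S.orderEmbOfFin_mem rfl i)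
  have hc : (i : ℕ) ≤ Nat.count Nat.Prime (f i) := by
    rw [Nat.count_eq_card_filter_range]
    have hinj : Set.InjOn (fun j : ℕ => f ⟨j % S.card, Nat.mod_lt _ i.pos⟩)
        (Finset.range (i : ℕ)) := by
      intro a ha b hb hab
      simp only at hab
      have := f.injective hab
      simp only [Fin.mk.injEq] at this
      simp only [Finset.coe_range, Set.mem_Iio] at ha hb
      rwa [Nat.mod_eq_of_lt (ha.trans i.2), Nat.mod_eq_of_lt (hb.trans i.2)] at this
    calc (i : ℕ) = (Finset.range (i : ℕ)).card := (Finset.card_range _).symm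
      _ ≤ _ := Finset.card_le_card_of_injOn _ ?_ hinj
    intro j hj
    rw [Finset.coe_range, Set.mem_Iio] at hj
    have hjlt : j % S.card = j := Nat.mod_eq_of_lt (hj.trans i.2)
    refine Finset.mem_filter.2 ⟨Finset.mem_range.2 ?_, ?_⟩
    · exact f.strictMono (by simp [Fin.lt_def, hjlt, hj])
    · exact hS _ (S.orderEmbOfFin_mem rfl _)
  calc Nat.nth Nat.Prime i ≤ Nat.nth Nat.Prime (Nat.count Nat.Prime (f i)) :=
        (Nat.nth_le_nth Nat.infinite_setOf_prime).2 hc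
    _ = f i := Nat.nth_count hp

lemma prod_nth_prime_le (S : Finset ℕ) (hS : ∀ p ∈ S, p.Prime) :
    ∏ i ∈ Finset.range S.card, Nat.nth Nat.Prime i ≤ ∏ p ∈ S, p := by
  rw [← Fin.prod_univ_eq_prod_range (fun i => Nat.nth Nat.Prime i) S.card]
  have : ∏ p ∈ S, p = ∏ i : Fin S.card, S.orderEmbOfFin rfl i := by
    rw [← Finset.prod_coe_sort S (fun x => x)]
    exact (Fintype.prod_equiv (S.orderIsoOfFin rfl).toEquiv _ _
      (fun i => by rw [← Finset.coe_orderIsoOfFin_apply]; rfl)).symm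
  rw [this]
  exact Finset.prod_le_prod' fun i _ => nth_prime_le_of_card S hS i

lemma card_primeFactors_bound {m k : ℕ} (hm : m ≠ 0)
    (h : m < ∏ i ∈ Finset.range (k + 1), Nat.nth Nat.Prime i) :
    m.primeFactors.card ≤ k := by
  by_contra hlt
  push_neg at hlt
  have h1 : ∏ i ∈ Finset.range (k + 1), Nat.nth Nat.Prime i ≤
      ∏ i ∈ Finset.range m.primeFactors.card, Nat.nth Nat.Prime i := by
    apply Finset.prod_le_prod_of_subset_of_one_le'
    · exact Finset.range_subset_range.2 hlt
    · intro i _ _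
      exact (Nat.nth_mem_of_infinite Nat.infinite_setOf_prime i).one_lt.le
  have h2 := prod_nth_prime_le m.primeFactors fun p hp => Nat.prime_of_mem_primeFactors hp
  have h3 : ∏ p ∈ m.primeFactors, p ≤ m :=
    Nat.le_of_dvd (Nat.pos_of_ne_zero hm) (Nat.prod_primeFactors_dvd m)
  omega

/-- With t the greatest natural with t·ε ≤ 1 and r = t+1, for n ≤ p₁⋯p_r·p_{r+1} the
relation m + ε·ω(m) ≤ n holds for all m ≤ n − r, hence n is a barrier for ε·ω iff the
relation holds for all m with n − r < m < n. -/
theorem stmt_7 (ε : ℝ) (hε : 0 < ε) (hε1 : ε ≤ 1) (t : ℕ)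
    (ht : (t : ℝ) * ε ≤ 1) (htmax : ∀ t' : ℕ, (t' : ℝ) * ε ≤ 1 → t' ≤ t)
    (r : ℕ) (hr : r = t + 1) (n : ℕ)
    (hn : n ≤ ∏ i ∈ Finset.range (r + 1), Nat.nth Nat.Prime i) :
    (∀ m : ℕ, m ≤ n - r → (m : ℝ) + ε * (m.primeFactors.card : ℝ) ≤ n) ∧
    ((∀ m : ℕ, m < n → (m : ℝ) + ε * (m.primeFactors.card : ℝ) ≤ n) ↔
      (∀ m : ℕ, n - r < m → m < n → (m : ℝ) + ε * (m.primeFactors.card : ℝ) ≤ n)) := by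
  have key : ∀ m : ℕ, m ≤ n - r → (m : ℝ) + ε * (m.primeFactors.card : ℝ) ≤ n := by
    intro m hm
    rcases eq_or_ne m 0 with rfl | hm0
    · simp
    have hrpos : 0 < r := by omega
    have hnr : r ≤ n := by
      by_contra h
      push_neg at h
      omega
    have hmr : m + r ≤ n := by omega
    have hcard : m.primeFactors.card ≤ r := by
      apply card_primeFactors_bound hm0
      calc m < n := by omega
        _ ≤ _ := hn
    have : ε * (m.primeFactors.card : ℝ) ≤ r := by
      calc ε * (m.primeFactors.card : ℝ) ≤ 1 * (m.primeFactors.card : ℝ) := by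
            apply mul_le_mul_of_nonneg_right hε1 (by positivity)
        _ = (m.primeFactors.card : ℝ) := one_mul _
        _ ≤ r := by exact_mod_cast hcard
    have hmn : (m : ℝ) + (r : ℝ) ≤ n := by exact_mod_cast hmr
    linarith
  refine ⟨key, ⟨fun h m _ hmn => h m hmn, fun h m hmn => ?_⟩⟩
  rcases le_or_gt m (n - r) with hle | hlt
  · exact key m hle
  · exact h m hlt hmn
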